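/- Let K and L be fields, n ≥ m ≥ 1, and σ₁,…,σₙ, τ₁,…,τ_m : K → L field homomorphisms with Π_{i=1}^n σᵢ(a) = Π_{j=1}^m τⱼ(a) for all a ∈ K. If char K = 0, or char K = p and no p of the σᵢ are equal, then n = m and there is a permutation g ∈ Sₙ with τᵢ = σ_{g(i)} for all i. -/

import Mathlib

open Multiset

open scoped Classical in
/-- count of the empty multiset in a powerset is 1 -/
private lemma count_zero_powerset {α : Type*} (s : Multiset α) :
    s.powerset.count 0 = 1 := by
  induction s using Multiset.induction_on with
  | empty => simp
  | cons x s ih =>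
    rw [Multiset.powerset_cons, Multiset.count_add, ih]
    have h0 : (0 : Multiset α) ∉ (s.powerset.map (x ::ₘ ·)) := by
      intro h
      rcases Multiset.mem_map.1 h with ⟨t, _, ht⟩
      exact Multiset.cons_ne_zero ht
    rw [Multiset.count_eq_zero.2 h0]

open scoped Classical in
/-- count of a singleton in a powerset equals the count of the element -/
private lemma count_singleton_powerset {α : Type*} (a : α) (s : Multiset α) :
    s.powerset.count {a} = s.count a := by
  induction s using Multiset.induction_on with
  | empty => simp
  | cons x s ih =>
    rw [Multiset.powerset_cons, Multiset.count_add, ih]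
    by_cases hxa : x = a
    · subst hxa
      have hinj : Function.Injective (x ::ₘ · : Multiset α → Multiset α) := by
        intro u v huv
        exact (Multiset.cons_inj_right x).1 huv
      have : ({x} : Multiset α) = x ::ₘ 0 := rfl
      rw [this, Multiset.count_map_eq_count' _ _ hinj, count_zero_powerset,
        Multiset.count_cons_self]
    · have h0 : ({a} : Multiset α) ∉ (s.powerset.map (x ::ₘ ·)) := by
        intro h
        rcases Multiset.mem_map.1 h with ⟨t, _, ht⟩
        have : x ∈ ({a} : Multiset α) := ht ▸ Multiset.mem_cons_self x t
        exact hxa (Multiset.mem_singleton.1 this)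
      rw [Multiset.count_eq_zero.2 h0, Multiset.count_cons_of_ne (Ne.symm hxa)]
      omega

section Main

variable {K L : Type*} [Field K] [Field L]

/-- The product character attached to a multiset of ring homs. -/
noncomputable def mchi (S : Multiset (K →+* L)) : K →* L where
  toFun a := (S.map (fun f => f a)).prod
  map_one' := by simp
  map_mul' a b := by
    simp only [map_mul]
    exact Multiset.prod_map_mul

lemma mchi_apply (S : Multiset (K →+* L)) (a : K) :
    mchi S a = (S.map (fun f => f a)).prod := rfl

@[simp] lemma mchi_zero : (mchi (0 : Multiset (K →+* L))) = 1 := by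
  ext a; simp [mchi_apply]

@[simp] lemma mchi_singleton (ρ : K →+* L) (a : K) : mchi {ρ} a = ρ a := by
  simp [mchi_apply]

lemma mchi_apply_zero {S : Multiset (K →+* L)} (h : S ≠ 0) : mchi S 0 = 0 := by
  obtain ⟨ρ, hρ⟩ := Multiset.exists_mem_of_ne_zero h
  exact Multiset.prod_eq_zero (Multiset.mem_map.2 ⟨ρ, hρ, map_zero ρ⟩)

lemma mchi_add (A B : Multiset (K →+* L)) (a : K) :
    mchi (A + B) a = mchi A a * mchi B a := by
  simp [mchi_apply, Multiset.map_add, Multiset.prod_add]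

/-- The two-variable character. -/
noncomputable def theta (U V : Multiset (K →+* L)) : (K × K) →* L :=
  ((mchi U).comp (MonoidHom.fst K K)) * ((mchi V).comp (MonoidHom.snd K K))

lemma theta_apply (U V : Multiset (K →+* L)) (a b : K) :
    theta U V (a, b) = mchi U a * mchi V b := rfl

open scoped Classical in
/-- Dedekind independence: equal pointwise sums of characters give equal counts (in L). -/
lemma count_cast_eq {M : Type*} [CommMonoid M] (Q₁ Q₂ : Multiset (M →* L))
    (h : ∀ x : M, (Q₁.map (fun θ => θ x)).sum = (Q₂.map (fun θ => θ x)).sum)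
    (θ : M →* L) : ((Q₁.count θ : ℕ) : L) = ((Q₂.count θ : ℕ) : L) := by
  set F : Finset (M →* L) := (Q₁ + Q₂).toFinset with hF
  have hsum : ∀ (Q : Multiset (M →* L)), Q.toFinset ⊆ F → ∀ x : M,
      ∑ θ ∈ F, ((Q.count θ : ℕ) : L) * θ x = (Q.map (fun θ => θ x)).sum := by
    intro Q hQ x
    rw [Finset.sum_multiset_map_count]
    rw [← Finset.sum_subset hQ (fun θ _ hθ => by
      rw [Multiset.count_eq_zero_of_notMem (fun hm => hθ (Multiset.mem_toFinset.2 hm))]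
      simp)]
    refine Finset.sum_congr rfl fun θ _ => ?_
    simp [nsmul_eq_mul]
  have key : ∀ θ ∈ F, ((Q₁.count θ : ℕ) : L) - ((Q₂.count θ : ℕ) : L) = 0 := by
    refine linearIndependent_iff'.1 (linearIndependent_monoidHom M L) F
      (fun θ => ((Q₁.count θ : ℕ) : L) - ((Q₂.count θ : ℕ) : L)) ?_
    funext x
    have : (∑ θ ∈ F, (((Q₁.count θ : ℕ) : L) - ((Q₂.count θ : ℕ) : L)) • (θ : M → L)) x
        = ∑ θ ∈ F, (((Q₁.count θ : ℕ) : L) - ((Q₂.count θ : ℕ) : L)) * θ x := by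
      simp [Finset.sum_apply]
    rw [this]
    have hsub1 : Q₁.toFinset ⊆ F := by
      intro θ hθ
      rw [hF, Multiset.toFinset_add]
      exact Finset.mem_union_left _ hθ
    have hsub2 : Q₂.toFinset ⊆ F := by
      intro θ hθ
      rw [hF, Multiset.toFinset_add]
      exact Finset.mem_union_right _ hθ
    have h1 := hsum Q₁ hsub1 x
    have h2 := hsum Q₂ hsub2 x
    simp only [sub_mul, Finset.sum_sub_distrib, h1, h2, h x, sub_self]
    simp
  by_cases hθF : θ ∈ F
  · have := key θ hθF
    exact sub_eq_zero.1 this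
  · have h1 : Q₁.count θ = 0 := Multiset.count_eq_zero_of_notMem
      (fun hm => hθF (Multiset.mem_toFinset.2 (Multiset.mem_add.2 (Or.inl hm))))
    have h2 : Q₂.count θ = 0 := Multiset.count_eq_zero_of_notMem
      (fun hm => hθF (Multiset.mem_toFinset.2 (Multiset.mem_add.2 (Or.inr hm))))
    rw [h1, h2]

/-- casts of naturals that are small relative to the characteristic are injective -/
lemma cast_eq_cast_nat (ρ : K →+* L) {c d : ℕ}
    (hsmall : ∀ p : ℕ, p.Prime → CharP K p → c < p ∧ d < p)
    (h : ((c : ℕ) : L) = ((d : ℕ) : L)) : c = d := by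
  obtain ⟨q, hq⟩ := CharP.exists K
  rcases CharP.char_is_prime_or_zero K q with hprime | h0
  · haveI : CharP L q := charP_of_injective_ringHom ρ.injective q
    have hmod : c ≡ d [MOD q] := (CharP.natCast_eq_natCast L q).1 h
    obtain ⟨hc, hd⟩ := hsmall q hprime hq
    have hmod' : c % q = d % q := hmod
    rwa [Nat.mod_eq_of_lt hc, Nat.mod_eq_of_lt hd] at hmod'
  · subst h0
    haveI : CharP L 0 := charP_of_injective_ringHom ρ.injective 0
    haveI : CharZero L := CharP.charP_to_charZero L
    exact Nat.cast_injective h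

open scoped Classical in
/-- The condition: in characteristic p, each hom occurs fewer than p times. -/
def GoodCond (S : Multiset (K →+* L)) : Prop :=
  ∀ p : ℕ, p.Prime → CharP K p → ∀ ρ : K →+* L, S.count ρ < p

open scoped Classical in
lemma goodCond_mono {S T : Multiset (K →+* L)} (h : S ≤ T) (hT : GoodCond T) :
    GoodCond S := fun p hp hc ρ =>
  lt_of_le_of_lt (Multiset.count_le_of_le ρ h) (hT p hp hc ρ)

open scoped Classical in
/-- Core lemma: a product of at least two characters (with multiplicity below the
characteristic) is not additive. -/
lemma mchi_not_additive : ∀ (N : ℕ) (S : Multiset (K →+* L)), Multiset.card S ≤ N →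
    2 ≤ Multiset.card S → GoodCond S →
    ∃ a b : K, mchi S (a + b) ≠ mchi S a + mchi S b := by
  intro N
  induction N with
  | zero => intro S h h2 _; omega
  | succ N ih =>
    intro S hSN h2 hcond
    by_contra hadd
    push_neg at hadd
    have hS0 : S ≠ 0 := by
      intro h; rw [h] at h2; simp at h2
    obtain ⟨ρ₀, hρ₀⟩ := Multiset.exists_mem_of_ne_zero hS0
    have hS1 : S - {ρ₀} ≠ 0 := by
      have hle : ({ρ₀} : Multiset (K →+* L)) ≤ S := Multiset.singleton_le.2 hρ₀
      have hcards : Multiset.card (S - {ρ₀}) + 1 = Multiset.card S := by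
        rw [← Multiset.card_singleton ρ₀, ← Multiset.card_add,
          tsub_add_cancel_of_le hle]
      intro h
      rw [h, Multiset.card_zero] at hcards
      omega
    -- the fundamental relation from additivity
    have hrel : ∀ x : K × K,
        (((antidiagonal S).map (fun p => theta p.1 p.2)).map (fun θ => θ x)).sum
          = ((({theta S 0, theta 0 S} : Multiset ((K × K) →* L))).map
              (fun θ => θ x)).sum := by
      rintro ⟨a, b⟩
      have h1 : mchi S (a + b)
          = ((antidiagonal S).map (fun p => mchi p.1 a * mchi p.2 b)).sum := by
        show (S.map (fun f => f (a + b))).prod = _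
        simp only [_root_.map_add]
        rw [Multiset.prod_map_add]
        rfl
      calc (((antidiagonal S).map (fun p => theta p.1 p.2)).map (fun θ => θ (a, b))).sum
          = ((antidiagonal S).map (fun p => mchi p.1 a * mchi p.2 b)).sum := by
            rw [Multiset.map_map]; rfl
        _ = mchi S (a + b) := h1.symm
        _ = mchi S a + mchi S b := hadd a b
        _ = ((({theta S 0, theta 0 S} : Multiset ((K × K) →* L))).map
              (fun θ => θ (a, b))).sum := by
            simp [theta_apply]
    set θ₀ : (K × K) →* L := theta {ρ₀} (S - {ρ₀}) with hθ₀
    have hcount := count_cast_eq _ _ hrel θ₀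
    -- right side count is zero
    have hne1 : θ₀ ≠ theta S 0 := by
      intro h
      have := DFunLike.congr_fun h (1, 0)
      rw [theta_apply, theta_apply] at this
      simp only [map_one, one_mul, mchi_zero, MonoidHom.one_apply, mul_one] at this
      rw [mchi_apply_zero hS1] at this
      exact zero_ne_one this
    have hne2 : θ₀ ≠ theta 0 S := by
      intro h
      have := DFunLike.congr_fun h (0, 1)
      rw [theta_apply, theta_apply] at this
      simp only [map_one, mul_one, mchi_zero, MonoidHom.one_apply, one_mul,
        mchi_singleton, _root_.map_zero] at this
      exact zero_ne_one this
    have hrc : (({theta S 0, theta 0 S} : Multiset ((K × K) →* L))).count θ₀ = 0 := by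
      rw [Multiset.count_eq_zero]
      intro h
      rcases Multiset.mem_cons.1 h with h' | h'
      · exact hne1 h'
      · exact hne2 (Multiset.mem_singleton.1 h')
    -- left side count is the multiplicity of ρ₀
    have hlc : ((antidiagonal S).map (fun p => theta p.1 p.2)).count θ₀
        = S.count ρ₀ := by
      rw [Multiset.count_map]
      have hiff : ∀ q ∈ antidiagonal S,
          (θ₀ = theta q.1 q.2 ↔ q = ({ρ₀}, S - {ρ₀})) := by
        rintro ⟨U, V⟩ hq
        have hUV : U + V = S := Multiset.mem_antidiagonal.1 hq
        constructor
        · intro hth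
          -- first component determines a character equal to ρ₀
          have hU : ∀ a : K, mchi U a = ρ₀ a := by
            intro a
            have := DFunLike.congr_fun hth (a, 1)
            rw [theta_apply, theta_apply] at this
            simp only [map_one, mul_one, mchi_singleton] at this
            exact this.symm
          have hV0 : V ≠ 0 := by
            intro h
            have := DFunLike.congr_fun hth (1, 0)
            rw [theta_apply, theta_apply] at this
            simp only [map_one, one_mul, h, mchi_zero, MonoidHom.one_apply,
              mul_one, mchi_singleton] at this
            rw [mchi_apply_zero hS1] at this
            simp at this
          have hU0 : U ≠ 0 := by
            intro h
            have := hU 0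
            rw [h] at this
            simp only [mchi_zero, MonoidHom.one_apply, _root_.map_zero] at this
            exact one_ne_zero this
          have hUle : U ≤ S := hUV ▸ Multiset.le_add_right U V
          have hUcard : Multiset.card U < Multiset.card S := by
            have : Multiset.card U + Multiset.card V = Multiset.card S := by
              rw [← Multiset.card_add, hUV]
            have hV1 : 1 ≤ Multiset.card V := by
              rcases Multiset.card_pos.2 hV0 with h; omega
            omega
          have hUone : Multiset.card U = 1 := by
            by_contra hc1
            have hU2 : 2 ≤ Multiset.card U := by
              have := Multiset.card_pos.2 hU0
              omega
            obtain ⟨a, b, hab⟩ := ih U (by omega) hU2 (goodCond_mono hUle hcond)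
            apply hab
            rw [hU, hU, hU]
            exact _root_.map_add ρ₀ a b
          obtain ⟨ρ, hρ⟩ := Multiset.card_eq_one.1 hUone
          have hρρ₀ : ρ = ρ₀ := by
            ext a
            have := hU a
            rw [hρ] at this
            simpa using this
          rw [hρρ₀] at hρ
          have hVval : V = S - {ρ₀} := by
            have hadd2 : V + {ρ₀} = S := by rw [← hρ, add_comm]; exact hUV
            exact eq_tsub_of_add_eq hadd2
          rw [Prod.ext_iff]
          exact ⟨hρ, hVval⟩
        · intro hq2
          rw [hq2]
      rw [Multiset.filter_congr hiff]
      have h3 : ∀ q ∈ antidiagonal S,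
          ((q = ({ρ₀}, S - {ρ₀})) ↔ ({ρ₀} : Multiset (K →+* L)) = q.1) := by
        rintro ⟨U, V⟩ hq
        have hUV : U + V = S := Multiset.mem_antidiagonal.1 hq
        constructor
        · intro h
          rw [h]
        · intro h
          have hV : V = S - {ρ₀} := by
            apply eq_tsub_of_add_eq
            rw [add_comm, h]
            exact hUV
          rw [Prod.ext_iff]
          exact ⟨h.symm, hV⟩
      rw [Multiset.filter_congr h3]
      have h4 : Multiset.card (Multiset.filter
            (fun q => ({ρ₀} : Multiset (K →+* L)) = q.1) (antidiagonal S))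
          = Multiset.count ({ρ₀} : Multiset (K →+* L))
              ((antidiagonal S).map Prod.fst) :=
        (Multiset.count_map Prod.fst (antidiagonal S) {ρ₀}).symm
      rw [h4, Multiset.antidiagonal_map_fst, count_singleton_powerset]
    rw [hlc, hrc] at hcount
    have hpos : 1 ≤ S.count ρ₀ := Multiset.count_pos.2 hρ₀
    have : S.count ρ₀ = 0 := by
      refine cast_eq_cast_nat ρ₀ (fun p hp hcp => ?_) (by simpa using hcount)
      exact ⟨hcond p hp hcp ρ₀, hp.pos⟩
    omega

open scoped Classical in
/-- counting characters in a powerset expansion -/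
lemma count_mchi_powerset (R : Multiset (K →+* L)) (hR : GoodCond R) (ρ : K →+* L) :
    (R.powerset.map mchi).count (mchi {ρ}) = R.count ρ := by
  rw [Multiset.count_map]
  have hiff : ∀ U ∈ R.powerset, (mchi {ρ} = mchi U ↔ U = {ρ}) := by
    intro U hU
    constructor
    · intro hMe
      have hfun : ∀ a : K, mchi U a = ρ a := by
        intro a
        rw [← hMe]; simp
      have hU0 : U ≠ 0 := by
        intro h
        have := hfun 0
        rw [h] at this
        simp only [mchi_zero, MonoidHom.one_apply, _root_.map_zero] at this
        exact one_ne_zero this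
      have hUle : U ≤ R := Multiset.mem_powerset.1 hU
      have hUone : Multiset.card U = 1 := by
        by_contra hc1
        have hU2 : 2 ≤ Multiset.card U := by
          have := Multiset.card_pos.2 hU0
          omega
        obtain ⟨a, b, hab⟩ := mchi_not_additive (Multiset.card U) U le_rfl hU2
          (goodCond_mono hUle hR)
        apply hab
        rw [hfun, hfun, hfun]
        exact _root_.map_add ρ a b
      obtain ⟨ρ', hρ'⟩ := Multiset.card_eq_one.1 hUone
      have : ρ' = ρ := by
        ext a
        have := hfun a
        rw [hρ'] at this
        simpa using this
      rw [hρ', this]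
    · rintro rfl; rfl
  rw [Multiset.filter_congr hiff]
  have : Multiset.card (Multiset.filter (fun U => U = ({ρ} : Multiset (K →+* L)))
      R.powerset) = R.powerset.count {ρ} := by
    rw [Multiset.count, Multiset.countP_eq_card_filter]
    congr 1
    apply Multiset.filter_congr
    intro q _
    exact eq_comm
  rw [this, count_singleton_powerset]

open scoped Classical in
/-- Main comparison: if both sides satisfy the multiplicity condition, the multisets agree. -/
lemma multiset_eq_of_good (S T : Multiset (K →+* L)) (hS : GoodCond S) (hT : GoodCond T)
    (h : ∀ a : K, mchi S a = mchi T a) : S = T := by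
  ext ρ
  have e1 : ∀ (R : Multiset (K →+* L)) (t : K),
      ((R.powerset.map mchi).map (fun θ => θ t)).sum = mchi R (1 + t) := by
    intro R t
    show _ = (R.map (fun f => f (1 + t))).prod
    simp only [_root_.map_add, _root_.map_one]
    rw [Multiset.prod_map_add]
    rw [Multiset.map_map]
    calc ((R.powerset.map (fun U => mchi U t))).sum
        = (((antidiagonal R).map Prod.snd).map (fun U => mchi U t)).sum := by
          rw [Multiset.antidiagonal_map_snd]
      _ = ((antidiagonal R).map (fun p => mchi p.2 t)).sum := by
          rw [Multiset.map_map]; rfl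
      _ = ((antidiagonal R).map
            (fun p => (p.1.map (fun _ => (1:L))).prod * (p.2.map (fun f => f t)).prod)).sum := by
          congr 1
          apply Multiset.map_congr rfl
          intro p _
          rw [Multiset.map_const', Multiset.prod_replicate, one_pow, one_mul]
          rfl
  have hrel : ∀ x : K, ((S.powerset.map mchi).map (fun θ => θ x)).sum
      = ((T.powerset.map mchi).map (fun θ => θ x)).sum := by
    intro t
    rw [e1, e1, h]
  have hcnt := count_cast_eq _ _ hrel (mchi {ρ})
  rw [count_mchi_powerset S hS ρ, count_mchi_powerset T hT ρ] at hcnt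
  refine cast_eq_cast_nat ρ (fun p hp hcp => ⟨hS p hp hcp ρ, hT p hp hcp ρ⟩) hcnt

open scoped Classical in
/-- Reduction: the multiplicity condition on the short side can be dropped. -/
lemma multiset_eq_main : ∀ (M : ℕ) (S T : Multiset (K →+* L)), Multiset.card T ≤ M →
    GoodCond S → Multiset.card T ≤ Multiset.card S →
    (∀ a : K, mchi S a = mchi T a) → S = T := by
  intro M
  induction M with
  | zero =>
    intro S T hTM _ _ h
    have hT0 : T = 0 := Multiset.card_eq_zero.1 (le_antisymm hTM (Nat.zero_le _))
    subst hT0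
    by_contra hS0'
    have hS0 : S ≠ 0 := fun h' => hS0' (by rw [h'])
    have := h 0
    rw [mchi_apply_zero hS0] at this
    simp at this
  | succ M ih =>
    intro S T hTM hS hcard h
    by_cases hT : GoodCond T
    · exact multiset_eq_of_good S T hS hT h
    · exfalso
      unfold GoodCond at hT
      push_neg at hT
      obtain ⟨p, hp, hcp, ρ, hcount⟩ := hT
      haveI : Fact p.Prime := ⟨hp⟩
      haveI := hcp
      have hrep : Multiset.replicate p ρ ≤ T :=
        Multiset.le_count_iff_replicate_le.1 hcount
      set T' : Multiset (K →+* L) :=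
        (T - Multiset.replicate p ρ) + {ρ.comp (frobenius K p)} with hT'
      have hsplit : T = (T - Multiset.replicate p ρ) + Multiset.replicate p ρ :=
        (tsub_add_cancel_of_le hrep).symm
      have hprod : ∀ a : K, mchi T a = mchi T' a := by
        intro a
        conv_lhs => rw [hsplit]
        rw [mchi_add, mchi_add]
        congr 1
        show (((Multiset.replicate p ρ)).map (fun f => f a)).prod = mchi {ρ.comp (frobenius K p)} a
        rw [Multiset.map_replicate, Multiset.prod_replicate, mchi_singleton]
        show (ρ a) ^ p = ρ (frobenius K p a)
        rw [frobenius_def, map_pow]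
      have hcardT : Multiset.card T = Multiset.card (T - Multiset.replicate p ρ) + p := by
        conv_lhs => rw [hsplit]
        rw [Multiset.card_add, Multiset.card_replicate]
      have hcardT' : Multiset.card T' = Multiset.card (T - Multiset.replicate p ρ) + 1 := by
        rw [hT', Multiset.card_add, Multiset.card_singleton]
      have hplt : Multiset.card T' < Multiset.card T := by
        rw [hcardT, hcardT']
        have := hp.two_le
        omega
      have hST' : S = T' := by
        refine ih S T' (by omega) hS (by omega) ?_
        intro a; rw [h a, hprod a]
      rw [hST'] at hcard
      omega

end Main

theorem stmt_13 {K L : Type*} [Field K] [Field L] (n m : ℕ)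
    (hnm : m ≤ n) (hm : 1 ≤ m)
    (σ : Fin n → (K →+* L)) (τ : Fin m → (K →+* L))
    (heq : ∀ a : K, ∏ i : Fin n, σ i a = ∏ j : Fin m, τ j a)
    (hchar : ∀ p : ℕ, p.Prime → CharP K p →
      ¬ ∃ s : Finset (Fin n), s.card = p ∧ ∀ i ∈ s, ∀ j ∈ s, σ i = σ j) :
    n = m ∧ ∃ e : Fin m ≃ Fin n, ∀ i : Fin m, τ i = σ (e i) := by
  classical
  set S : Multiset (K →+* L) := Finset.univ.val.map σ with hSdef
  set T : Multiset (K →+* L) := Finset.univ.val.map τ with hTdef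
  have hmchiS : ∀ a : K, mchi S a = ∏ i : Fin n, σ i a := by
    intro a
    rw [mchi_apply, hSdef, Multiset.map_map]
    rfl
  have hmchiT : ∀ a : K, mchi T a = ∏ j : Fin m, τ j a := by
    intro a
    rw [mchi_apply, hTdef, Multiset.map_map]
    rfl
  have hcardS : Multiset.card S = n := by
    rw [hSdef, Multiset.card_map]
    simp
  have hcardT : Multiset.card T = m := by
    rw [hTdef, Multiset.card_map]
    simp
  have hcountS : ∀ ρ : K →+* L, S.count ρ = (Finset.univ.filter (fun i => ρ = σ i)).card := by
    intro ρ
    rw [hSdef, Multiset.count_map]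
    rfl
  have hcountT : ∀ ρ : K →+* L, T.count ρ = (Finset.univ.filter (fun j => ρ = τ j)).card := by
    intro ρ
    rw [hTdef, Multiset.count_map]
    rfl
  have hgood : GoodCond S := by
    intro p hp hcp ρ
    by_contra hc
    push_neg at hc
    rw [hcountS] at hc
    obtain ⟨t, hts, htcard⟩ := Finset.exists_subset_card_eq hc
    refine hchar p hp hcp ⟨t, htcard, ?_⟩
    intro i hi j hj
    have h1 := (Finset.mem_filter.1 (hts hi)).2
    have h2 := (Finset.mem_filter.1 (hts hj)).2
    rw [← h1, ← h2]
  have hST : S = T := by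
    refine multiset_eq_main (Multiset.card T) S T le_rfl hgood (by omega) ?_
    intro a
    rw [hmchiS, hmchiT, heq]
  have hnmEq : n = m := by
    rw [← hcardS, ← hcardT, hST]
  refine ⟨hnmEq, ?_⟩
  have hfibcard : ∀ ρ : K →+* L,
      Fintype.card {j : Fin m // τ j = ρ} = Fintype.card {i : Fin n // σ i = ρ} := by
    intro ρ
    rw [Fintype.card_subtype, Fintype.card_subtype]
    have h1 : (Finset.univ.filter (fun j => τ j = ρ)).card
        = (Finset.univ.filter (fun j => ρ = τ j)).card := by
      congr 1
      apply Finset.filter_congr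
      intro j _
      simp [eq_comm]
    have h2 : (Finset.univ.filter (fun i => σ i = ρ)).card
        = (Finset.univ.filter (fun i => ρ = σ i)).card := by
      congr 1
      apply Finset.filter_congr
      intro i _
      simp [eq_comm]
    rw [h1, h2, ← hcountS, ← hcountT, hST]
  have efib : ∀ ρ : K →+* L, {j : Fin m // τ j = ρ} ≃ {i : Fin n // σ i = ρ} :=
    fun ρ => Fintype.equivOfCardEq (hfibcard ρ)
  refine ⟨((Equiv.sigmaFiberEquiv τ).symm.trans
    ((Equiv.sigmaCongrRight efib).trans (Equiv.sigmaFiberEquiv σ))), ?_⟩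
  intro j
  have : (Equiv.sigmaFiberEquiv τ).symm j = ⟨τ j, ⟨j, rfl⟩⟩ := rfl
  simp only [Equiv.trans_apply, this, Equiv.sigmaCongrRight_apply]
  exact ((efib (τ j)) ⟨j, rfl⟩).2.symm
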